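/- arXiv:2501.15863 — 2 statements merged into one kernel-verified Lean document; each statement's English description precedes it below -/
import Mathlib

section
/- The set Π_p^{Hv}(U,F) of p-summing weighted holomorphic mappings with the norm π_p^{Hv} is a Banach space: π_p^{Hv} is a norm on Π_p^{Hv}(U,F), it dominates ‖·‖_v, and every absolutely π_p^{Hv}-convergent series converges in π_p^{Hv}-norm. -/
open scoped BigOperators
open MeasureTheory

noncomputable section

/-- The closed unit ball of the weighted holomorphic space `Hv(U)`. -/
def HvBall {E : Type*} [NormedAddCommGroup E] [NormedSpace ℂ E]
    (v : E → ℝ) (U : Set E) : Set (E → ℂ) :=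
  {g | DifferentiableOn ℂ g U ∧ ∀ x ∈ U, v x * ‖g x‖ ≤ 1}

/-- `sup_{g ∈ B_{Hv(U)}} (∑ |λᵢ|^p v(xᵢ)^p |g(xᵢ)|^p)^(1/p)`. -/
def hvSup {E : Type*} [NormedAddCommGroup E] [NormedSpace ℂ E]
    (p : ℝ) (v : E → ℝ) (U : Set E) {n : ℕ} (lam : Fin n → ℂ) (x : Fin n → E) : ℝ :=
  ⨆ g : HvBall v U, (∑ i, ‖lam i‖ ^ p * v (x i) ^ p * ‖(g : E → ℂ) (x i)‖ ^ p) ^ (1 / p)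

/-- `f` satisfies the `p`-summing weighted holomorphic inequality with constant `C`. -/
def PSummingWith {E F : Type*} [NormedAddCommGroup E] [NormedSpace ℂ E]
    [NormedAddCommGroup F] [NormedSpace ℂ F]
    (p : ℝ) (v : E → ℝ) (U : Set E) (f : E → F) (C : ℝ) : Prop :=
  ∀ (n : ℕ) (lam : Fin n → ℂ) (x : Fin n → E), (∀ i, x i ∈ U) →
    (∑ i, ‖lam i‖ ^ p * v (x i) ^ p * ‖f (x i)‖ ^ p) ^ (1 / p) ≤ C * hvSup p v U lam x

/-- The `p`-summing weighted holomorphic norm `π_p^{Hv}(f)`. -/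
def pihv {E F : Type*} [NormedAddCommGroup E] [NormedSpace ℂ E]
    [NormedAddCommGroup F] [NormedSpace ℂ F]
    (p : ℝ) (v : E → ℝ) (U : Set E) (f : E → F) : ℝ :=
  sInf {C | 0 ≤ C ∧ PSummingWith p v U f C}

section Aux

open Metric Filter Finset

variable {E F : Type*} [NormedAddCommGroup E] [NormedSpace ℂ E]
    [NormedAddCommGroup F] [NormedSpace ℂ F]
variable {v : E → ℝ} {U : Set E} {p : ℝ}

lemma hvSup_nonneg {n : ℕ} {lam : Fin n → ℂ} {x : Fin n → E}
    (hx : ∀ i, 0 ≤ v (x i)) : 0 ≤ hvSup p v U lam x :=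
  Real.iSup_nonneg fun g => Real.rpow_nonneg
    (Finset.sum_nonneg fun i _ => mul_nonneg
      (mul_nonneg (Real.rpow_nonneg (norm_nonneg _) _) (Real.rpow_nonneg (hx i) _))
      (Real.rpow_nonneg (norm_nonneg _) _)) _

lemma term_eq (hp : 1 ≤ p) {a b c : ℝ} (ha : 0 ≤ a) (hb : 0 ≤ b) (hc : 0 ≤ c) :
    a ^ p * b ^ p * c ^ p = (a * b * c) ^ p := by
  rw [Real.mul_rpow (mul_nonneg ha hb) hc, Real.mul_rpow ha hb]

lemma rpow_roundtrip (hp : 1 ≤ p) {t : ℝ} (ht : 0 ≤ t) : (t ^ p) ^ (1 / p) = t := by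
  have hp0 : p ≠ 0 := by positivity
  rw [← Real.rpow_mul ht, mul_one_div_cancel hp0, Real.rpow_one]

lemma psumming_congr {f g : E → F} {C : ℝ} (h : ∀ x ∈ U, f x = g x)
    (hf : PSummingWith p v U f C) : PSummingWith p v U g C := by
  intro n lam x hx
  have : ∀ i : Fin n, g (x i) = f (x i) := fun i => (h _ (hx i)).symm
  simp only [this]
  exact hf n lam x hx

lemma psumming_mono (hv : ∀ x ∈ U, 0 < v x) {f : E → F} {C C' : ℝ} (h : C ≤ C')
    (hf : PSummingWith p v U f C) : PSummingWith p v U f C' := fun n lam x hx =>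
  (hf n lam x hx).trans
    (mul_le_mul_of_nonneg_right h (hvSup_nonneg fun i => (hv _ (hx i)).le))

lemma psumming_zero (hp : 1 ≤ p) :
    PSummingWith p v U (fun _ => (0 : F)) 0 := by
  intro n lam x hx
  have hp0 : p ≠ 0 := by positivity
  have h1p : (1 : ℝ) / p ≠ 0 := by positivity
  simp [Real.zero_rpow hp0, Real.zero_rpow h1p, Real.zero_rpow (inv_ne_zero hp0)]

lemma psumming_add (hp : 1 ≤ p) (hv : ∀ x ∈ U, 0 < v x) {f g : E → F} {Cf Cg : ℝ}
    (hf : PSummingWith p v U f Cf) (hg : PSummingWith p v U g Cg) :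
    PSummingWith p v U (fun y => f y + g y) (Cf + Cg) := by
  intro n lam x hx
  have hp0 : (0:ℝ) ≤ p := by positivity
  have hv0 : ∀ i, 0 ≤ v (x i) := fun i => (hv _ (hx i)).le
  show (∑ i, ‖lam i‖ ^ p * v (x i) ^ p * ‖f (x i) + g (x i)‖ ^ p) ^ (1 / p)
      ≤ (Cf + Cg) * hvSup p v U lam x
  set a : Fin n → ℝ := fun i => ‖lam i‖ * v (x i) * ‖f (x i)‖ with ha
  set b : Fin n → ℝ := fun i => ‖lam i‖ * v (x i) * ‖g (x i)‖ with hb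
  have hanon : ∀ i ∈ Finset.univ (α := Fin n), 0 ≤ a i := fun i _ =>
    mul_nonneg (mul_nonneg (norm_nonneg _) (hv0 i)) (norm_nonneg _)
  have hbnon : ∀ i ∈ Finset.univ (α := Fin n), 0 ≤ b i := fun i _ =>
    mul_nonneg (mul_nonneg (norm_nonneg _) (hv0 i)) (norm_nonneg _)
  have step1 : (∑ i, ‖lam i‖ ^ p * v (x i) ^ p * ‖f (x i) + g (x i)‖ ^ p) ^ (1 / p)
      ≤ (∑ i, (a i + b i) ^ p) ^ (1 / p) := by
    apply Real.rpow_le_rpow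
    · exact Finset.sum_nonneg fun i _ => mul_nonneg (mul_nonneg
        (Real.rpow_nonneg (norm_nonneg _) _) (Real.rpow_nonneg (hv0 i) _))
        (Real.rpow_nonneg (norm_nonneg _) _)
    · apply Finset.sum_le_sum
      intro i _
      rw [term_eq hp (norm_nonneg _) (hv0 i) (norm_nonneg _)]
      apply Real.rpow_le_rpow
        (mul_nonneg (mul_nonneg (norm_nonneg _) (hv0 i)) (norm_nonneg _)) _ hp0
      have : a i + b i = ‖lam i‖ * v (x i) * (‖f (x i)‖ + ‖g (x i)‖) := by ring
      rw [this]
      exact mul_le_mul_of_nonneg_left (norm_add_le _ _)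
        (mul_nonneg (norm_nonneg _) (hv0 i))
    · positivity
  have step2 : (∑ i, (a i + b i) ^ p) ^ (1 / p)
      ≤ (∑ i, a i ^ p) ^ (1 / p) + (∑ i, b i ^ p) ^ (1 / p) :=
    Real.Lp_add_le_of_nonneg (s := Finset.univ) hp hanon hbnon
  have hfa : (∑ i, a i ^ p) ^ (1 / p) ≤ Cf * hvSup p v U lam x := by
    have heq : (∑ i, a i ^ p) = ∑ i, ‖lam i‖ ^ p * v (x i) ^ p * ‖f (x i)‖ ^ p :=
      Finset.sum_congr rfl fun i _ =>
        (term_eq hp (norm_nonneg _) (hv0 i) (norm_nonneg _)).symm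
    rw [heq]; exact hf n lam x hx
  have hgb : (∑ i, b i ^ p) ^ (1 / p) ≤ Cg * hvSup p v U lam x := by
    have heq : (∑ i, b i ^ p) = ∑ i, ‖lam i‖ ^ p * v (x i) ^ p * ‖g (x i)‖ ^ p :=
      Finset.sum_congr rfl fun i _ =>
        (term_eq hp (norm_nonneg _) (hv0 i) (norm_nonneg _)).symm
    rw [heq]; exact hg n lam x hx
  calc (∑ i, ‖lam i‖ ^ p * v (x i) ^ p * ‖f (x i) + g (x i)‖ ^ p) ^ (1 / p)
      ≤ (∑ i, (a i + b i) ^ p) ^ (1 / p) := step1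
    _ ≤ (∑ i, a i ^ p) ^ (1 / p) + (∑ i, b i ^ p) ^ (1 / p) := step2
    _ ≤ Cf * hvSup p v U lam x + Cg * hvSup p v U lam x := add_le_add hfa hgb
    _ = (Cf + Cg) * hvSup p v U lam x := by ring

lemma psumming_smul (hp : 1 ≤ p) (hv : ∀ x ∈ U, 0 < v x) {f : E → F} {C : ℝ} (c : ℂ)
    (hf : PSummingWith p v U f C) :
    PSummingWith p v U (fun y => c • f y) (‖c‖ * C) := by
  intro n lam x hx
  show (∑ i, ‖lam i‖ ^ p * v (x i) ^ p * ‖c • f (x i)‖ ^ p) ^ (1 / p)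
      ≤ ‖c‖ * C * hvSup p v U lam x
  have hp0 : p ≠ 0 := by positivity
  have hv0 : ∀ i, 0 ≤ v (x i) := fun i => (hv _ (hx i)).le
  have key : (∑ i, ‖lam i‖ ^ p * v (x i) ^ p * ‖c • f (x i)‖ ^ p)
      = ‖c‖ ^ p * ∑ i, ‖lam i‖ ^ p * v (x i) ^ p * ‖f (x i)‖ ^ p := by
    rw [Finset.mul_sum]
    apply Finset.sum_congr rfl
    intro i _
    rw [norm_smul, Real.mul_rpow (norm_nonneg c) (norm_nonneg _)]
    ring
  have hsum0 : 0 ≤ ∑ i, ‖lam i‖ ^ p * v (x i) ^ p * ‖f (x i)‖ ^ p :=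
    Finset.sum_nonneg fun i _ => mul_nonneg (mul_nonneg
      (Real.rpow_nonneg (norm_nonneg _) _) (Real.rpow_nonneg (hv0 i) _))
      (Real.rpow_nonneg (norm_nonneg _) _)
  calc (∑ i, ‖lam i‖ ^ p * v (x i) ^ p * ‖c • f (x i)‖ ^ p) ^ (1 / p)
      = (‖c‖ ^ p * ∑ i, ‖lam i‖ ^ p * v (x i) ^ p * ‖f (x i)‖ ^ p) ^ (1 / p) := by
        rw [key]
    _ = ‖c‖ * (∑ i, ‖lam i‖ ^ p * v (x i) ^ p * ‖f (x i)‖ ^ p) ^ (1 / p) := by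
        rw [Real.mul_rpow (Real.rpow_nonneg (norm_nonneg c) _) hsum0,
          rpow_roundtrip hp (norm_nonneg c)]
    _ ≤ ‖c‖ * (C * hvSup p v U lam x) :=
        mul_le_mul_of_nonneg_left (hf n lam x hx) (norm_nonneg c)
    _ = ‖c‖ * C * hvSup p v U lam x := by ring

lemma psumming_finset_sum (hp : 1 ≤ p) (hv : ∀ x ∈ U, 0 < v x) {ι : Type*}
    (s : Finset ι) (g : ι → E → F) (C : ι → ℝ)
    (h : ∀ i ∈ s, PSummingWith p v U (g i) (C i)) :
    PSummingWith p v U (fun y => ∑ i ∈ s, g i y) (∑ i ∈ s, C i) := by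
  classical
  induction s using Finset.induction with
  | empty => simpa using psumming_zero hp
  | @insert a s ha ih =>
    rw [Finset.sum_insert ha]
    refine psumming_congr (fun y _ => ?_)
      (psumming_add hp hv (h a (Finset.mem_insert_self a s))
        (ih fun i hi => h i (Finset.mem_insert_of_mem hi)))
    rw [Finset.sum_insert ha]

/-- `pihv` is nonnegative whenever the defining set is nonempty (or always). -/
lemma pihv_nonneg (f : E → F) : 0 ≤ pihv p v U f :=
  Real.sInf_nonneg fun _ hb => hb.1

lemma pihv_bddBelow (f : E → F) : BddBelow {C | 0 ≤ C ∧ PSummingWith p v U f C} :=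
  ⟨0, fun _ hb => hb.1⟩

/-- The infimum is attained as a `p`-summing constant. -/
lemma psumming_pihv (hv : ∀ x ∈ U, 0 < v x) {f : E → F}
    (hf : ∃ C, 0 ≤ C ∧ PSummingWith p v U f C) :
    PSummingWith p v U f (pihv p v U f) := by
  obtain ⟨C₀, hC₀, hps₀⟩ := hf
  intro n lam x hx
  set s := hvSup p v U lam x with hs
  have hs0 : 0 ≤ s := hvSup_nonneg fun i => (hv _ (hx i)).le
  rcases eq_or_lt_of_le hs0 with hs0' | hs0'
  · have h0 := hps₀ n lam x hx
    rw [← hs] at h0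
    rw [← hs0', mul_zero] at h0 ⊢
    exact h0
  · rw [← div_le_iff₀ hs0']
    refine le_csInf ⟨C₀, hC₀, hps₀⟩ fun b hb => ?_
    rw [div_le_iff₀ hs0']
    exact hb.2 n lam x hx

/-- Domination: `v x * ‖f x‖ ≤ pihv f`. -/
lemma pihv_dominates (hv : ∀ x ∈ U, 0 < v x) {f : E → F}
    (hf : ∃ C, 0 ≤ C ∧ PSummingWith p v U f C) (hp : 1 ≤ p) {x : E} (hx : x ∈ U) :
    v x * ‖f x‖ ≤ pihv p v U f := by
  have hps := psumming_pihv hv hf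
  have h1 := hps 1 (fun _ => 1) (fun _ => x) (fun _ => hx)
  have hv0 : 0 ≤ v x := (hv x hx).le
  have hsup : hvSup p v U (fun _ : Fin 1 => (1:ℂ)) (fun _ => x) ≤ 1 := by
    refine Real.iSup_le (fun g => ?_) zero_le_one
    have hb := g.2.2 x hx
    calc (∑ i : Fin 1, ‖(1:ℂ)‖ ^ p * v x ^ p * ‖(g : E → ℂ) x‖ ^ p) ^ (1/p)
        = ((v x * ‖(g : E → ℂ) x‖) ^ p) ^ (1/p) := by
          rw [Fin.sum_univ_one, norm_one, Real.one_rpow, one_mul,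
            ← Real.mul_rpow hv0 (norm_nonneg _)]
      _ = v x * ‖(g : E → ℂ) x‖ := rpow_roundtrip hp (by positivity)
      _ ≤ 1 := hb
  have hLHS : (∑ i : Fin 1, ‖(1:ℂ)‖ ^ p * v x ^ p * ‖f x‖ ^ p) ^ (1/p) = v x * ‖f x‖ := by
    rw [Fin.sum_univ_one, norm_one, Real.one_rpow, one_mul,
      ← Real.mul_rpow hv0 (norm_nonneg _), rpow_roundtrip hp (by positivity)]
  have hpi0 : 0 ≤ pihv p v U f := pihv_nonneg f
  calc v x * ‖f x‖ = _ := hLHS.symm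
    _ ≤ pihv p v U f * hvSup p v U (fun _ : Fin 1 => (1:ℂ)) (fun _ => x) := h1
    _ ≤ pihv p v U f * 1 := mul_le_mul_of_nonneg_left hsup hpi0
    _ = pihv p v U f := mul_one _

lemma pihv_zero (hp : 1 ≤ p) : pihv p v U (fun _ => (0:F)) = 0 :=
  le_antisymm (csInf_le (pihv_bddBelow _) ⟨le_refl 0, psumming_zero hp⟩) (pihv_nonneg _)

lemma pihv_smul_le (hp : 1 ≤ p) (hv : ∀ x ∈ U, 0 < v x) {f : E → F} (c : ℂ)
    (hf : ∃ C, 0 ≤ C ∧ PSummingWith p v U f C) :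
    pihv p v U (c • f) ≤ ‖c‖ * pihv p v U f := by
  refine csInf_le (pihv_bddBelow _) ⟨mul_nonneg (norm_nonneg c) (pihv_nonneg f), ?_⟩
  exact psumming_congr (fun y _ => rfl) (psumming_smul hp hv c (psumming_pihv hv hf))

end Aux
section Cauchy

open Metric Filter Finset

variable {E F : Type*} [NormedAddCommGroup E] [NormedSpace ℂ E]
    [NormedAddCommGroup F] [NormedSpace ℂ F]

/-- Cauchy estimate on a ball in a Banach space, obtained by restricting to complex lines. -/
lemma cauchy_bound {f : E → F} {x : E} {r M : ℝ} (hr : 0 < r) (hM : 0 ≤ M)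
    (hd : DifferentiableOn ℂ f (ball x r)) (hb : ∀ y ∈ ball x r, ‖f y‖ ≤ M) :
    ‖fderiv ℂ f x‖ ≤ 2 * M / r := by
  have hdiff : ∀ y ∈ ball x r, DifferentiableAt ℂ f y := fun y hy =>
    hd.differentiableAt (isOpen_ball.mem_nhds hy)
  refine ContinuousLinearMap.opNorm_le_bound _ (by positivity) fun w => ?_
  rcases eq_or_ne w 0 with rfl | hw
  · simp [div_nonneg, hM, hr.le]
  have hnw : 0 < ‖w‖ := norm_pos_iff.2 hw
  set R : ℝ := r / (2 * ‖w‖) with hR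
  have hR0 : 0 < R := by positivity
  set φ : ℂ → F := fun z => f (x + z • w) with hφ
  have hmap : ∀ z : ℂ, z ∈ closedBall (0 : ℂ) R → x + z • w ∈ ball x r := by
    intro z hz
    rw [mem_closedBall, dist_zero_right] at hz
    rw [mem_ball, dist_comm, dist_self_add_right]
    calc ‖z • w‖ = ‖z‖ * ‖w‖ := norm_smul z w
      _ ≤ R * ‖w‖ := mul_le_mul_of_nonneg_right hz hnw.le
      _ = r / 2 := by rw [hR]; field_simp
      _ < r := half_lt_self hr
  have hφz : ∀ z ∈ closedBall (0 : ℂ) R, HasDerivAt φ (fderiv ℂ f (x + z • w) w) z := by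
    intro z hz
    have h1 : HasDerivAt (fun z : ℂ => x + z • w) w z := by
      simpa using ((hasDerivAt_id z).smul_const w).const_add x
    exact (hdiff _ (hmap z hz)).hasFDerivAt.comp_hasDerivAt z h1
  have hderiv0 : deriv φ 0 = fderiv ℂ f x w := by
    have := hφz 0 (mem_closedBall_self hR0.le)
    simpa using this.deriv
  have hdc : DiffContOnCl ℂ φ (ball (0 : ℂ) R) := by
    apply DifferentiableOn.diffContOnCl
    rw [closure_ball (0 : ℂ) hR0.ne']
    exact fun z hz => ((hφz z hz).differentiableAt).differentiableWithinAt
  have hsp : ∀ z ∈ sphere (0 : ℂ) R, ‖φ z‖ ≤ M := fun z hz =>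
    hb _ (hmap z (sphere_subset_closedBall hz))
  have hest := Complex.norm_deriv_le_of_forall_mem_sphere_norm_le hR0 hdc hsp
  rw [hderiv0] at hest
  calc ‖fderiv ℂ f x w‖ ≤ M / R := hest
    _ = 2 * M / r * ‖w‖ := by rw [hR]; field_simp

end Cauchy
open Metric Filter Topology in
/-- `(Π_p^{Hv}(U,F), π_p^{Hv})` is a Banach space: `π_p^{Hv}` dominates `‖·‖_v`, is a
norm (triangle inequality, homogeneity, definiteness), and every absolutely
`π_p^{Hv}`-convergent series converges in the `π_p^{Hv}`-norm. -/
theorem stmt4 {E F : Type*} [NormedAddCommGroup E] [NormedSpace ℂ E] [CompleteSpace E]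
    [NormedAddCommGroup F] [NormedSpace ℂ F] [CompleteSpace F]
    (U : Set E) (hU : IsOpen U) (v : E → ℝ) (hv : ∀ x ∈ U, 0 < v x)
    (hvc : ContinuousOn v U) (p : ℝ) (hp : 1 ≤ p) :
    (∀ f : E → F, DifferentiableOn ℂ f U → (∃ C, 0 ≤ C ∧ PSummingWith p v U f C) →
      ∀ x ∈ U, v x * ‖f x‖ ≤ pihv p v U f) ∧
    (∀ f g : E → F, DifferentiableOn ℂ f U → DifferentiableOn ℂ g U →
      (∃ C, 0 ≤ C ∧ PSummingWith p v U f C) → (∃ C, 0 ≤ C ∧ PSummingWith p v U g C) →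
      (∃ C, 0 ≤ C ∧ PSummingWith p v U (f + g) C) ∧
        pihv p v U (f + g) ≤ pihv p v U f + pihv p v U g) ∧
    (∀ (c : ℂ) (f : E → F), DifferentiableOn ℂ f U →
      (∃ C, 0 ≤ C ∧ PSummingWith p v U f C) →
      (∃ C, 0 ≤ C ∧ PSummingWith p v U (c • f) C) ∧
        pihv p v U (c • f) = ‖c‖ * pihv p v U f) ∧
    (∀ f : E → F, DifferentiableOn ℂ f U → (∃ C, 0 ≤ C ∧ PSummingWith p v U f C) →
      pihv p v U f = 0 → ∀ x ∈ U, f x = 0) ∧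
    (∀ fs : ℕ → E → F, (∀ n, DifferentiableOn ℂ (fs n) U) →
      (∀ n, ∃ C, 0 ≤ C ∧ PSummingWith p v U (fs n) C) →
      Summable (fun n => pihv p v U (fs n)) →
      ∃ f : E → F, DifferentiableOn ℂ f U ∧ (∃ C, 0 ≤ C ∧ PSummingWith p v U f C) ∧
        ∀ ε : ℝ, 0 < ε → ∃ N : ℕ, ∀ n ≥ N,
          PSummingWith p v U (f - ∑ i ∈ Finset.range n, fs i) ε) := by
  have hp0 : (0:ℝ) < p := lt_of_lt_of_le one_pos hp
  refine ⟨?_, ?_, ?_, ?_, ?_⟩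
  · -- domination
    intro f _ hf x hx
    exact pihv_dominates hv hf hp hx
  · -- triangle inequality
    intro f g _ _ hf hg
    have hadd : PSummingWith p v U (f + g) (pihv p v U f + pihv p v U g) :=
      psumming_congr (fun y _ => rfl)
        (psumming_add hp hv (psumming_pihv hv hf) (psumming_pihv hv hg))
    exact ⟨⟨_, add_nonneg (pihv_nonneg f) (pihv_nonneg g), hadd⟩,
      csInf_le (pihv_bddBelow _) ⟨add_nonneg (pihv_nonneg f) (pihv_nonneg g), hadd⟩⟩
  · -- homogeneity
    intro c f _ hf
    have hsm : PSummingWith p v U (c • f) (‖c‖ * pihv p v U f) :=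
      psumming_congr (fun y _ => rfl) (psumming_smul hp hv c (psumming_pihv hv hf))
    refine ⟨⟨_, mul_nonneg (norm_nonneg c) (pihv_nonneg f), hsm⟩, ?_⟩
    rcases eq_or_ne c 0 with rfl | hc
    · have h0 : (0 : ℂ) • f = fun _ => (0 : F) := by funext y; simp
      rw [h0, pihv_zero hp]; simp
    · refine le_antisymm (pihv_smul_le hp hv c hf) ?_
      have h2 : pihv p v U (c⁻¹ • (c • f)) ≤ ‖c⁻¹‖ * pihv p v U (c • f) :=
        pihv_smul_le hp hv c⁻¹ ⟨_, mul_nonneg (norm_nonneg c) (pihv_nonneg f), hsm⟩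
      have h3 : c⁻¹ • (c • f) = f := by rw [smul_smul, inv_mul_cancel₀ hc, one_smul]
      rw [h3, norm_inv] at h2
      have hc0 : (0:ℝ) < ‖c‖ := norm_pos_iff.2 hc
      calc ‖c‖ * pihv p v U f ≤ ‖c‖ * (‖c‖⁻¹ * pihv p v U (c • f)) :=
            mul_le_mul_of_nonneg_left h2 hc0.le
        _ = pihv p v U (c • f) := by
            rw [← mul_assoc, mul_inv_cancel₀ hc0.ne', one_mul]
  · -- definiteness
    intro f _ hf h0 x hx
    have hdom := pihv_dominates hv hf hp hx
    rw [h0] at hdom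
    have hvx := hv x hx
    have hfx : ‖f x‖ ≤ 0 := by nlinarith [norm_nonneg (f x)]
    simpa using le_antisymm hfx (norm_nonneg _)
  · -- completeness
    intro fs hdiff hC hsum
    set π : ℕ → ℝ := fun n => pihv p v U (fs n) with hπ
    have hπ0 : ∀ n, 0 ≤ π n := fun n => pihv_nonneg _
    have hps : ∀ n, PSummingWith p v U (fs n) (π n) := fun n => psumming_pihv hv (hC n)
    have hbound : ∀ n, ∀ x ∈ U, ‖fs n x‖ ≤ π n / v x := by
      intro n x hx
      rw [le_div_iff₀ (hv x hx)]
      calc ‖fs n x‖ * v x = v x * ‖fs n x‖ := mul_comm _ _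
        _ ≤ π n := pihv_dominates hv (hC n) hp hx
    have hsx : ∀ x ∈ U, Summable fun n => fs n x := fun x hx =>
      Summable.of_norm_bounded (hsum.div_const (v x)) (fun n => hbound n x hx)
    set f : E → F := fun y => ∑' n, fs n y with hfdef
    have htails : ∀ n : ℕ, Summable fun i => π (i + n) := fun n =>
      (summable_nat_add_iff n).2 hsum
    -- tail estimate
    have tail_ps' : ∀ n : ℕ, PSummingWith p v U
        (fun y => f y - ∑ i ∈ Finset.range n, fs i y) (∑' i, π (i + n)) := by
      intro n m lam x hx
      have hvx0 : ∀ j : Fin m, 0 ≤ v (x j) := fun j => (hv _ (hx j)).le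
      have hSk : ∀ k : ℕ, PSummingWith p v U (fun y => ∑ i ∈ Finset.range k, fs (i + n) y)
          (∑ i ∈ Finset.range k, π (i + n)) := fun k =>
        psumming_finset_sum hp hv _ _ _ (fun i _ => hps (i + n))
      have hkb : ∀ k : ℕ, (∑ j, ‖lam j‖ ^ p * v (x j) ^ p *
          ‖∑ i ∈ Finset.range k, fs (i + n) (x j)‖ ^ p) ^ (1 / p)
          ≤ (∑' i, π (i + n)) * hvSup p v U lam x := fun k =>
        (hSk k m lam x hx).trans (mul_le_mul_of_nonneg_right
          (Summable.sum_le_tsum (Finset.range k) (fun i _ => hπ0 _) (htails n))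
          (hvSup_nonneg hvx0))
      have hlim : ∀ j : Fin m, Tendsto (fun k => ∑ i ∈ Finset.range k, fs (i + n) (x j))
          atTop (𝓝 (f (x j) - ∑ i ∈ Finset.range n, fs i (x j))) := by
        intro j
        have hsj : Summable fun i => fs i (x j) := hsx _ (hx j)
        have hsj' : Summable fun i => fs (i + n) (x j) := (summable_nat_add_iff n).2 hsj
        have heq : f (x j) - ∑ i ∈ Finset.range n, fs i (x j) = ∑' i, fs (i + n) (x j) := by
          have h2 := Summable.sum_add_tsum_nat_add (f := fun i => fs i (x j)) n hsj
          have h3 : f (x j) = ∑' i, fs i (x j) := rfl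
          rw [h3, ← h2]; abel
        rw [heq]
        exact hsj'.hasSum.tendsto_sum_nat
      have htend : Tendsto (fun k => (∑ j, ‖lam j‖ ^ p * v (x j) ^ p *
          ‖∑ i ∈ Finset.range k, fs (i + n) (x j)‖ ^ p) ^ (1 / p)) atTop
          (𝓝 ((∑ j, ‖lam j‖ ^ p * v (x j) ^ p *
            ‖f (x j) - ∑ i ∈ Finset.range n, fs i (x j)‖ ^ p) ^ (1 / p))) := by
        apply Tendsto.comp
          (Real.continuousAt_rpow_const _ _ (Or.inr (div_nonneg zero_le_one hp0.le)))
        apply tendsto_finset_sum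
        intro j _
        exact Tendsto.const_mul (‖lam j‖ ^ p * v (x j) ^ p)
          (Tendsto.comp (Real.continuousAt_rpow_const _ _ (Or.inr hp0.le)) (hlim j).norm)
      exact le_of_tendsto htend (Filter.Eventually.of_forall hkb)
    have tail_ps : ∀ n : ℕ, PSummingWith p v U
        (f - ∑ i ∈ Finset.range n, fs i) (∑' i, π (i + n)) := fun n =>
      psumming_congr (fun y _ => by simp [Finset.sum_apply]) (tail_ps' n)
    -- differentiability of the limit
    have hdf : DifferentiableOn ℂ f U := by
      intro x₀ hx₀
      have hδ : 0 < v x₀ / 2 := half_pos (hv x₀ hx₀)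
      have hca : ContinuousAt v x₀ := hvc.continuousAt (hU.mem_nhds hx₀)
      have h1 : ∀ᶠ y in 𝓝 x₀, y ∈ U := Filter.eventually_of_mem (hU.mem_nhds hx₀) fun y hy => hy
      have h2 : ∀ᶠ y in 𝓝 x₀, v x₀ / 2 < v y :=
        hca.eventually (eventually_gt_nhds (half_lt_self (hv x₀ hx₀)))
      obtain ⟨r, hr0, hball⟩ := Metric.eventually_nhds_iff_ball.1 (h1.and h2)
      have hMb : ∀ n, ∀ y ∈ ball x₀ r, ‖fs n y‖ ≤ π n / (v x₀ / 2) := by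
        intro n y hy
        obtain ⟨hyU, hyv⟩ := hball y hy
        refine (hbound n y hyU).trans ?_
        gcongr
        exact hπ0 n
      set u : ℕ → ℝ := fun n => 2 * (π n / (v x₀ / 2)) / (r / 2) with hu
      have hus : Summable u := ((hsum.div_const (v x₀ / 2)).mul_left 2).div_const (r / 2)
      have hUsub : ball x₀ r ⊆ U := fun y hy => (hball y hy).1
      have hfd : ∀ (n : ℕ), ∀ z ∈ ball x₀ (r / 2), ‖fderiv ℂ (fs n) z‖ ≤ u n := by
        intro n z hz
        have hsub : ball z (r / 2) ⊆ ball x₀ r := by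
          intro y hy
          rw [mem_ball] at hy hz ⊢
          calc dist y x₀ ≤ dist y z + dist z x₀ := dist_triangle _ _ _
            _ < r / 2 + r / 2 := add_lt_add hy hz
            _ = r := by ring
        exact cauchy_bound (half_pos hr0) (div_nonneg (hπ0 n) hδ.le)
          ((hdiff n).mono (hsub.trans hUsub)) (fun y hy => hMb n y (hsub hy))
      have htu : TendstoUniformlyOn (fun (t : Finset ℕ) z => ∑ n ∈ t, fderiv ℂ (fs n) z)
          (fun z => ∑' n, fderiv ℂ (fs n) z) atTop (ball x₀ (r / 2)) :=
        tendstoUniformlyOn_tsum hus (fun n z hz => hfd n z hz)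
      have hmem : ∀ z ∈ ball x₀ (r / 2), z ∈ U := fun z hz =>
        hUsub (ball_subset_ball (by linarith) hz)
      have hfder : HasFDerivAt f (∑' n, fderiv ℂ (fs n) x₀) x₀ := by
        apply hasFDerivAt_of_tendstoUniformlyOn isOpen_ball htu
          (fun t z hz => HasFDerivAt.fun_sum
            (fun n _ => ((hdiff n).differentiableAt (hU.mem_nhds (hmem z hz))).hasFDerivAt))
          (fun z hz => (hsx z (hmem z hz)).hasSum)
          (mem_ball_self (half_pos hr0))
      exact hfder.differentiableAt.differentiableWithinAt
    refine ⟨f, hdf, ⟨∑' i, π (i + 0), tsum_nonneg fun i => hπ0 _, ?_⟩, ?_⟩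
    · refine psumming_congr (fun y _ => ?_) (tail_ps' 0)
      simp
    · intro ε hε
      have hTlim : Tendsto (fun n => ∑' i, π (i + n)) atTop (𝓝 0) := by
        have h1 : ∀ n : ℕ, ∑' i, π (i + n) = (∑' i, π i) - ∑ i ∈ Finset.range n, π i := by
          intro n
          have h2 := Summable.sum_add_tsum_nat_add (f := π) n hsum
          linarith
        simp only [h1]
        have h3 := hsum.hasSum.tendsto_sum_nat
        have h4 : Tendsto (fun n => (∑' i, π i) - ∑ i ∈ Finset.range n, π i) atTop
            (𝓝 ((∑' i, π i) - ∑' i, π i)) := tendsto_const_nhds.sub h3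
        simpa using h4
      have hev : ∀ᶠ n in atTop, (∑' i, π (i + n)) < ε := hTlim.eventually (gt_mem_nhds hε)
      obtain ⟨N, hN⟩ := Filter.eventually_atTop.1 hev
      exact ⟨N, fun n hn => psumming_mono hv (le_of_lt (hN n hn)) (tail_ps n)⟩
end
end

section
/- For each x ∈ U and y ∈ F, the functional v(x)δ_x ⊗ y on Hv(U,F*), defined by (v(x)δ_x ⊗ y)(f) = v(x)⟨f(x), y⟩, is a bounded linear functional with norm exactly v(x)·‖δ_x‖·‖y‖, where ‖δ_x‖ = sup_{g∈B_{Hv(U)}}|g(x)|. -/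
open scoped BigOperators
open MeasureTheory

noncomputable section

/-- `‖δ_z‖ = sup_{g ∈ B_{Hv(U)}} |g(z)|`. -/
def dnorm {E : Type*} [NormedAddCommGroup E] [NormedSpace ℂ E]
    (v : E → ℝ) (U : Set E) (z : E) : ℝ :=
  ⨆ g : HvBall v U, ‖(g : E → ℂ) z‖

/-- `f` belongs to `Hv(U, F*)`. -/
def MemHvDual {E F : Type*} [NormedAddCommGroup E] [NormedSpace ℂ E]
    [NormedAddCommGroup F] [NormedSpace ℂ F]
    (v : E → ℝ) (U : Set E) (f : E → (F →L[ℂ] ℂ)) : Prop :=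
  DifferentiableOn ℂ f U ∧ ∃ K, ∀ x ∈ U, v x * ‖f x‖ ≤ K

/-- The action of the molecule `∑ λᵢ v(xᵢ) δ_{xᵢ} ⊗ yᵢ` on `f ∈ Hv(U,F*)`. -/
def molAct {E F : Type*} [NormedAddCommGroup E] [NormedSpace ℂ E]
    [NormedAddCommGroup F] [NormedSpace ℂ F]
    (v : E → ℝ) {n : ℕ} (lam : Fin n → ℂ) (x : Fin n → E) (y : Fin n → F)
    (f : E → (F →L[ℂ] ℂ)) : ℂ :=
  ∑ i, lam i * (v (x i) : ℂ) * (f (x i)) (y i)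

section Aux
variable {E : Type*} [NormedAddCommGroup E] [NormedSpace ℂ E]

lemma zero_mem_HvBall (v : E → ℝ) (U : Set E) (hv : ∀ x ∈ U, 0 ≤ v x) :
    (0 : E → ℂ) ∈ HvBall v U := by
  refine ⟨differentiableOn_const 0 |>.congr (fun _ _ => rfl), fun z hz => ?_⟩
  simp

lemma HvBall_bdd (v : E → ℝ) (U : Set E) {x : E} (hx : x ∈ U) (hvx : 0 < v x) :
    BddAbove (Set.range fun g : HvBall v U => ‖(g : E → ℂ) x‖) := by
  refine ⟨(v x)⁻¹, ?_⟩
  rintro t ⟨g, rfl⟩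
  have h := g.2.2 x hx
  rw [inv_eq_one_div, le_div_iff₀ hvx]
  nlinarith

lemma dnorm_nonneg (v : E → ℝ) (U : Set E) (hv : ∀ x ∈ U, 0 ≤ v x) (z : E) :
    0 ≤ dnorm v U z :=
  Real.iSup_nonneg fun _ => norm_nonneg _
end Aux

/-- For `x ∈ U` and `y ∈ F`, the functional `v(x)δ_x ⊗ y : f ↦ v(x)⟨f(x),y⟩` on
`Hv(U,F*)` is bounded with norm exactly `v(x)‖δ_x‖‖y‖`: this value is the least upper
bound of its values on the unit ball of `Hv(U,F*)`. -/
theorem stmt13 {E F : Type*} [NormedAddCommGroup E] [NormedSpace ℂ E] [CompleteSpace E]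
    [NormedAddCommGroup F] [NormedSpace ℂ F] [CompleteSpace F]
    (U : Set E) (hU : IsOpen U) (v : E → ℝ) (hv : ∀ x ∈ U, 0 < v x)
    (hvc : ContinuousOn v U)
    (x : E) (hx : x ∈ U) (y : F) :
    IsLUB {t : ℝ | ∃ f : E → (F →L[ℂ] ℂ), DifferentiableOn ℂ f U ∧
        (∀ z ∈ U, v z * ‖f z‖ ≤ 1) ∧ t = v x * ‖(f x) y‖}
      (v x * dnorm v U x * ‖y‖) := by
  have hvx := hv x hx
  have hvnn : ∀ z ∈ U, 0 ≤ v z := fun z hz => (hv z hz).le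
  have hbdd := HvBall_bdd v U hx hvx
  have hdnn := dnorm_nonneg v U hvnn x
  constructor
  · rintro t ⟨f, hf, hf1, rfl⟩
    by_cases hy : y = 0
    · simp only [hy, map_zero, norm_zero, mul_zero]
      positivity
    · set g : E → ℂ := fun z => (‖y‖ : ℂ)⁻¹ * f z y with hg
      have hgd : DifferentiableOn ℂ g U :=
        (hf.clm_apply (differentiableOn_const y)).const_mul _
      have hgb : g ∈ HvBall v U := by
        refine ⟨hgd, fun z hz => ?_⟩
        have h1 : ‖f z y‖ ≤ ‖f z‖ * ‖y‖ := (f z).le_opNorm y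
        have h2 := hf1 z hz
        have hyn : (0:ℝ) < ‖y‖ := norm_pos_iff.mpr hy
        have : ‖g z‖ = ‖y‖⁻¹ * ‖f z y‖ := by
          simp [hg, norm_mul]
        rw [this]
        have hvz := hvnn z hz
        rw [show v z * (‖y‖⁻¹ * ‖f z y‖) = ‖y‖⁻¹ * (v z * ‖f z y‖) by ring]
        rw [inv_mul_le_iff₀ hyn]
        nlinarith
      have hle : ‖g x‖ ≤ dnorm v U x :=
        le_ciSup hbdd (⟨g, hgb⟩ : HvBall v U)
      have hyn : (0:ℝ) < ‖y‖ := norm_pos_iff.mpr hy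
      have hfx : ‖(f x) y‖ = ‖y‖ * ‖g x‖ := by
        simp [hg, norm_mul]
        field_simp
      rw [hfx]
      nlinarith [mul_le_mul_of_nonneg_left hle (by positivity : (0:ℝ) ≤ v x * ‖y‖)]
  · intro b hb
    have h0 : (0:ℝ) ∈ {t : ℝ | ∃ f : E → (F →L[ℂ] ℂ), DifferentiableOn ℂ f U ∧
        (∀ z ∈ U, v z * ‖f z‖ ≤ 1) ∧ t = v x * ‖(f x) y‖} := by
      refine ⟨0, differentiableOn_const 0, fun z hz => by simp, by simp⟩
    have hb0 : (0:ℝ) ≤ b := hb h0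
    by_cases hy : y = 0
    · simp [hy, hb0]
    · obtain ⟨φ, hφ1, hφy⟩ := exists_dual_vector ℂ y (norm_ne_zero_iff.mpr hy)
      have hyn : (0:ℝ) < ‖y‖ := norm_pos_iff.mpr hy
      have key : ∀ g : HvBall v U, v x * ‖(g : E → ℂ) x‖ * ‖y‖ ≤ b := by
        intro g
        set f : E → (F →L[ℂ] ℂ) := fun z => (g : E → ℂ) z • φ with hfdef
        have hfd : DifferentiableOn ℂ f U := g.2.1.smul_const φ
        have hf1 : ∀ z ∈ U, v z * ‖f z‖ ≤ 1 := by
          intro z hz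
          have : ‖f z‖ = ‖(g : E → ℂ) z‖ := by
            simp only [hfdef]
            exact (norm_smul ((g : E → ℂ) z) φ).trans (by rw [hφ1, mul_one])
          rw [this]; exact g.2.2 z hz
        have hmem : v x * ‖(f x) y‖ ∈ {t : ℝ | ∃ f : E → (F →L[ℂ] ℂ),
            DifferentiableOn ℂ f U ∧ (∀ z ∈ U, v z * ‖f z‖ ≤ 1) ∧ t = v x * ‖(f x) y‖} :=
          ⟨f, hfd, hf1, rfl⟩
        have hval : ‖(f x) y‖ = ‖(g : E → ℂ) x‖ * ‖y‖ := by
          have : (f x) y = (g : E → ℂ) x * (‖y‖ : ℂ) := by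
            simp [hfdef, hφy]
          rw [this, norm_mul, Complex.norm_real, Real.norm_eq_abs, abs_of_nonneg hyn.le]
        have := hb hmem
        rw [hval] at this
        linarith [this]
      haveI : Nonempty (HvBall v U) := ⟨⟨0, zero_mem_HvBall v U hvnn⟩⟩
      have hpos : (0:ℝ) < v x * ‖y‖ := by positivity
      have hsup : dnorm v U x ≤ b / (v x * ‖y‖) := by
        refine ciSup_le fun g => ?_
        have := key g
        rw [le_div_iff₀ hpos]
        nlinarith
      rw [le_div_iff₀ hpos] at hsup
      calc v x * dnorm v U x * ‖y‖ = dnorm v U x * (v x * ‖y‖) := by ring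
        _ ≤ b := hsup
end
end
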